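/- arXiv:1204.3290 — 5 statements merged into one kernel-verified Lean document; each statement's English description precedes it below -/
import Mathlib

section
/- Let 0 < a < b with ab = rs. Then for every measurable function f : ℝ² → [0, ∞], the change-of-variables formula ∫_{A_p(a,b)} f(K(x)) dx = ∫_{A_p(a,b)} f(x) · r²s²/‖x − p‖⁴ dx holds (both sides possibly infinite). -/
open MeasureTheory
open scoped ENNReal NNReal

/-- The Kelvin transform centered at `p` with parameter `r * s`. -/
noncomputable def kelvin (p : EuclideanSpace ℝ (Fin 2)) (r s : ℝ)
    (x : EuclideanSpace ℝ (Fin 2)) : EuclideanSpace ℝ (Fin 2) :=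
  p + (r * s / ‖x - p‖ ^ 2) • (x - p)

/-- The open annulus of radii `a < b` centered at `p`. -/
def annulus (p : EuclideanSpace ℝ (Fin 2)) (a b : ℝ) :
    Set (EuclideanSpace ℝ (Fin 2)) :=
  {x | a < ‖x - p‖ ∧ ‖x - p‖ < b}

open EuclideanGeometry Module

theorem kelvin_change_of_variables (p : EuclideanSpace ℝ (Fin 2)) (r s a b : ℝ)
    (hr : 0 < r) (hs : 0 < s) (ha : 0 < a) (hab : a < b) (habrs : a * b = r * s)
    (f : EuclideanSpace ℝ (Fin 2) → ℝ≥0∞) (hf : Measurable f) :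
    ∫⁻ x in annulus p a b, f (kelvin p r s x) =
      ∫⁻ x in annulus p a b,
        f x * ENNReal.ofReal (r ^ 2 * s ^ 2 / ‖x - p‖ ^ 4) := by
  set R : ℝ := Real.sqrt (r * s) with hRdef
  have hrs : (0:ℝ) < r * s := mul_pos hr hs
  have hR2 : R ^ 2 = r * s := Real.sq_sqrt hrs.le
  have hR0 : R ≠ 0 := ne_of_gt (Real.sqrt_pos.2 hrs)
  -- kelvin is the inversion with radius R
  have hK : kelvin p r s = inversion p R := by
    funext x
    simp only [kelvin, inversion_def, vsub_eq_sub, vadd_eq_add, dist_eq_norm, div_pow, hR2]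
    abel
  set A : Set (EuclideanSpace ℝ (Fin 2)) := annulus p a b with hAdef
  have hcont : Continuous fun x : EuclideanSpace ℝ (Fin 2) => ‖x - p‖ :=
    (continuous_id.sub continuous_const).norm
  have hA : MeasurableSet A := by
    have : A = (fun x : EuclideanSpace ℝ (Fin 2) => ‖x - p‖) ⁻¹' Set.Ioo a b := rfl
    rw [this]
    exact (isOpen_Ioo.preimage hcont).measurableSet
  have hne : ∀ x ∈ A, x ≠ p := by
    intro x hx h
    rw [h] at hx
    simp only [hAdef, annulus, Set.mem_setOf_eq, sub_self, norm_zero] at hx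
    exact absurd hx.1 (not_lt.2 ha.le)
  have hnorm : ∀ x ∈ A, ‖inversion p R x - p‖ = r * s / ‖x - p‖ := by
    intro x hx
    have := dist_inversion_center p x R
    rw [dist_eq_norm, dist_eq_norm] at this
    rw [this, hR2]
  have hmem : ∀ x ∈ A, inversion p R x ∈ A := by
    intro x hx
    obtain ⟨h1, h2⟩ := hx
    have hd : (0:ℝ) < ‖x - p‖ := ha.trans h1
    constructor <;> rw [hnorm x ⟨h1, h2⟩]
    · rw [lt_div_iff₀ hd, ← habrs]; nlinarith
    · rw [div_lt_iff₀ hd, ← habrs]; nlinarith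
  have himg : inversion p R '' A = A := by
    apply Set.Subset.antisymm
    · rintro _ ⟨x, hx, rfl⟩; exact hmem x hx
    · intro y hy
      exact ⟨inversion p R y, hmem y hy, inversion_inversion p hR0 y⟩
  have hinj : Set.InjOn (inversion p R) A := (inversion_injective p hR0).injOn
  -- the derivative
  set f' : EuclideanSpace ℝ (Fin 2) → EuclideanSpace ℝ (Fin 2) →L[ℝ] EuclideanSpace ℝ (Fin 2) :=
    fun x => (R / dist x p) ^ 2 •
      ((ℝ ∙ (x - p))ᗮ.reflection :
        EuclideanSpace ℝ (Fin 2) →L[ℝ] EuclideanSpace ℝ (Fin 2)) with hf'def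
  have hderiv : ∀ x ∈ A, HasFDerivWithinAt (inversion p R) (f' x) A x := fun x hx =>
    (hasFDerivAt_inversion (hne x hx)).hasFDerivWithinAt
  have hdet : ∀ x ∈ A, |(f' x).det| = r ^ 2 * s ^ 2 / ‖x - p‖ ^ 4 := by
    intro x hx
    have hd : (0:ℝ) < ‖x - p‖ := ha.trans hx.1
    have hxp : x - p ≠ 0 := sub_ne_zero.2 (hne x hx)
    have hrank : finrank ℝ ((ℝ ∙ (x - p))ᗮ)ᗮ = 1 := by
      rw [Submodule.orthogonal_orthogonal]
      exact finrank_span_singleton hxp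
    have hdetrefl :
        LinearMap.det
          ((((ℝ ∙ (x - p))ᗮ.reflection :
            EuclideanSpace ℝ (Fin 2) →L[ℝ] EuclideanSpace ℝ (Fin 2))) :
              EuclideanSpace ℝ (Fin 2) →ₗ[ℝ] EuclideanSpace ℝ (Fin 2)) = -1 := by
      have h := Submodule.det_reflection (𝕜 := ℝ) (ℝ ∙ (x - p))ᗮ
      rw [hrank, pow_one] at h
      exact h
    have hfx : (f' x).det = ((R / dist x p) ^ 2) ^ finrank ℝ (EuclideanSpace ℝ (Fin 2)) * (-1) := by
      rw [hf'def]
      simp only [ContinuousLinearMap.det]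
      rw [ContinuousLinearMap.coe_smul, LinearMap.det_smul, hdetrefl]
    rw [hfx]
    have hfr : finrank ℝ (EuclideanSpace ℝ (Fin 2)) = 2 := finrank_euclideanSpace_fin
    rw [hfr, dist_eq_norm]
    rw [abs_mul, abs_neg, abs_one, mul_one, ← pow_mul, abs_pow]
    rw [abs_div, abs_of_pos hd, abs_of_pos (Real.sqrt_pos.2 hrs)]
    rw [div_pow]
    norm_num
    rw [show R ^ 4 = (R ^ 2) ^ 2 by ring, hR2]
    ring_nf
  -- main computation
  rw [hK]
  have key := lintegral_image_eq_lintegral_abs_det_fderiv_mul volume hA hderiv hinj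
    (fun x => f x * ENNReal.ofReal (r ^ 2 * s ^ 2 / ‖x - p‖ ^ 4))
  rw [himg] at key
  rw [show (∫⁻ x in annulus p a b,
        f x * ENNReal.ofReal (r ^ 2 * s ^ 2 / ‖x - p‖ ^ 4)) =
      ∫⁻ x in A, f x * ENNReal.ofReal (r ^ 2 * s ^ 2 / ‖x - p‖ ^ 4) from rfl, key]
  apply setLIntegral_congr_fun hA
  intro x hx
  beta_reduce
  have hd : (0:ℝ) < ‖x - p‖ := ha.trans hx.1
  rw [hdet x hx, hnorm x hx]
  have h1 : r ^ 2 * s ^ 2 / (r * s / ‖x - p‖) ^ 4 = ‖x - p‖ ^ 4 / (r ^ 2 * s ^ 2) := by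
    rw [div_pow]
    field_simp
  rw [h1]
  rw [← mul_assoc, mul_comm (ENNReal.ofReal _) (f _), mul_assoc,
    ← ENNReal.ofReal_mul (by positivity)]
  have h2 : r ^ 2 * s ^ 2 / ‖x - p‖ ^ 4 * (‖x - p‖ ^ 4 / (r ^ 2 * s ^ 2)) = 1 := by
    field_simp
  rw [h2, ENNReal.ofReal_one, mul_one]
end

section
/- Let x ≠ p and let u : ℝ² → ℝ be differentiable at K(x). Then u∘K is differentiable at x and the operator norms of the Fréchet derivatives satisfy ‖D(u∘K)(x)‖ = (rs/‖x − p‖²) · ‖Du(K(x))‖; equivalently, |∇(u∘K)(x)|² = |∇u(K(x))|² · r²s²/‖x − p‖⁴. -/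
lemma opNorm_comp_lie {E : Type*} [NormedAddCommGroup E] [InnerProductSpace ℝ E]
    (f : E →L[ℝ] ℝ) (e : E ≃ₗᵢ[ℝ] E) : ‖f.comp (e : E →L[ℝ] E)‖ = ‖f‖ :=
  f.opNorm_comp_linearIsometryEquiv e

lemma kelvin_eq_inversion (p : EuclideanSpace ℝ (Fin 2)) (r s : ℝ) (hrs : 0 ≤ r * s) :
    kelvin p r s = EuclideanGeometry.inversion p (Real.sqrt (r * s)) := by
  funext x
  simp only [kelvin, EuclideanGeometry.inversion_def, dist_eq_norm, div_pow,
    Real.sq_sqrt hrs, vsub_eq_sub, vadd_eq_add]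
  abel

theorem kelvin_conformal (p : EuclideanSpace ℝ (Fin 2)) (r s : ℝ)
    (hr : 0 < r) (hs : 0 < s) (x : EuclideanSpace ℝ (Fin 2)) (hx : x ≠ p)
    (u : EuclideanSpace ℝ (Fin 2) → ℝ)
    (hu : DifferentiableAt ℝ u (kelvin p r s x)) :
    DifferentiableAt ℝ (u ∘ kelvin p r s) x ∧
    ‖fderiv ℝ (u ∘ kelvin p r s) x‖ =
      (r * s / ‖x - p‖ ^ 2) * ‖fderiv ℝ u (kelvin p r s x)‖ ∧
    ‖fderiv ℝ (u ∘ kelvin p r s) x‖ ^ 2 =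
      ‖fderiv ℝ u (kelvin p r s x)‖ ^ 2 * (r ^ 2 * s ^ 2 / ‖x - p‖ ^ 4) := by
  have hrs : 0 ≤ r * s := le_of_lt (mul_pos hr hs)
  have hK := kelvin_eq_inversion p r s hrs
  have hKderiv := EuclideanGeometry.hasFDerivAt_inversion (c := p) (R := Real.sqrt (r * s)) hx
  rw [← hK] at hKderiv
  have hcoef : (Real.sqrt (r * s) / dist x p) ^ 2 = r * s / ‖x - p‖ ^ 2 := by
    rw [div_pow, Real.sq_sqrt hrs, dist_eq_norm]
  rw [hcoef] at hKderiv
  have hcomp := (hu.hasFDerivAt).comp x hKderiv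
  have hdiff : DifferentiableAt ℝ (u ∘ kelvin p r s) x := hcomp.differentiableAt
  have hfd := hcomp.fderiv
  refine ⟨hdiff, ?_, ?_⟩
  · rw [hfd, ContinuousLinearMap.comp_smul,
      norm_smul, opNorm_comp_lie,
      Real.norm_eq_abs, abs_of_nonneg (by positivity)]
  · rw [hfd, ContinuousLinearMap.comp_smul,
      norm_smul, opNorm_comp_lie,
      Real.norm_eq_abs, abs_of_nonneg (by positivity)]
    field_simp
end

section
/- Let (X, d) be a connected metric space and μ a finite Borel measure on X with μ(U) > 0 for every nonempty open set U. Fix R0 > 1 and let σ : X → (0, ∞) be such that for every x ∈ X, μ(B(x, σ(x))) = μ({y ∈ X : d(x, y) ≥ R0·σ(x)}), where B(x, ρ) is the open ball. Then for all x, y ∈ X, d(x, y) ≤ R0·max{σ(x), σ(y)} + min{σ(x), σ(y)}. -/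
open MeasureTheory

lemma concentration_aux {X : Type*} [MetricSpace X]
    [MeasurableSpace X] [BorelSpace X] [ConnectedSpace X]
    (μ : Measure X) [IsFiniteMeasure μ]
    (hpos : ∀ U : Set X, IsOpen U → U.Nonempty → 0 < μ U)
    (R0 : ℝ) (hR0 : 1 < R0) (σ : X → ℝ) (hσpos : ∀ x, 0 < σ x)
    (hσ : ∀ x, μ (Metric.ball x (σ x)) = μ {y : X | R0 * σ x ≤ dist x y})
    (x y : X) (hle : σ y ≤ σ x) : dist x y ≤ R0 * σ x + σ y := by
  by_contra hlt
  push_neg at hlt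
  set A : Set X := {z | R0 * σ x ≤ dist x z} with hA
  set B : Set X := {z | R0 * σ y ≤ dist y z} with hB
  have hyA : Metric.ball y (σ y) ⊆ A := by
    intro z hz
    rw [Metric.mem_ball] at hz
    have : dist x y ≤ dist x z + dist z y := dist_triangle x z y
    simp only [hA, Set.mem_setOf_eq]
    nlinarith
  have hxB : Metric.ball x (σ x) ⊆ B := by
    intro z hz
    rw [Metric.mem_ball] at hz
    have h1 : dist x y ≤ dist x z + dist z y := dist_triangle x z y
    have h2 : dist y z = dist z y := dist_comm y z
    have h3 : dist x z = dist z x := dist_comm x z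
    simp only [hB, Set.mem_setOf_eq]
    nlinarith [mul_le_mul_of_nonneg_left hle (by linarith : (0:ℝ) ≤ R0 - 1)]
  -- chain of measure inequalities
  have e1 : μ (Metric.ball x (σ x)) ≤ μ B := measure_mono hxB
  have e2 : μ (Metric.ball y (σ y)) ≤ μ A := measure_mono hyA
  have hAeq : μ (Metric.ball y (σ y)) = μ A := by
    have hx := hσ x
    have hy := hσ y
    rw [← hA] at hx
    rw [← hB] at hy
    refine le_antisymm e2 ?_
    calc μ A = μ (Metric.ball x (σ x)) := hx.symm
      _ ≤ μ B := e1
      _ = μ (Metric.ball y (σ y)) := hy.symm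
  have hballmeas : NullMeasurableSet (Metric.ball y (σ y)) μ :=
    (Metric.isOpen_ball.measurableSet).nullMeasurableSet
  have hdiff : μ (A \ Metric.ball y (σ y)) = 0 := by
    have := measure_diff hyA hballmeas (measure_ne_top μ _)
    rw [this, ← hAeq, tsub_self]
  set U : Set X := {z | R0 * σ x < dist x z ∧ σ y < dist y z} with hU
  have hUopen : IsOpen U := by
    apply IsOpen.inter
    · exact isOpen_lt continuous_const (continuous_const.dist continuous_id)
    · exact isOpen_lt continuous_const (continuous_const.dist continuous_id)
  have hUsub : U ⊆ A \ Metric.ball y (σ y) := by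
    rintro z ⟨h1, h2⟩
    refine ⟨le_of_lt h1, ?_⟩
    rw [Metric.mem_ball, dist_comm]
    exact not_lt.mpr (le_of_lt h2)
  have hUempty : U = ∅ := by
    by_contra hne
    have hp : 0 < μ U := hpos U hUopen (Set.nonempty_iff_ne_empty.mpr hne)
    have hz0 : μ U = 0 := le_antisymm (hdiff ▸ measure_mono hUsub) zero_le
    rw [hz0] at hp
    exact lt_irrefl 0 hp
  -- connectedness contradiction
  set C2 : Set X := Metric.closedBall y (σ y) with hC2
  set C1 : Set X := Metric.closedBall x (R0 * σ x) with hC1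
  have hcover : ∀ z, z ∈ C1 ∨ z ∈ C2 := by
    intro z
    by_contra hcon
    push_neg at hcon
    obtain ⟨h1, h2⟩ := hcon
    rw [hC1, Metric.mem_closedBall, not_le, dist_comm] at h1
    rw [hC2, Metric.mem_closedBall, not_le, dist_comm] at h2
    have : z ∈ U := ⟨h1, h2⟩
    rw [hUempty] at this
    exact this
  have hdisj : ∀ z, z ∈ C2 → z ∉ C1 := by
    intro z hz
    rw [hC2, Metric.mem_closedBall] at hz
    rw [hC1, Metric.mem_closedBall, not_le]
    have h1 : dist x y ≤ dist x z + dist z y := dist_triangle x z y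
    have h2 : dist z y = dist y z := dist_comm z y
    have h3 : dist x z = dist z x := dist_comm x z
    nlinarith
  have hC1open : IsOpen C1 := by
    have : C1 = C2ᶜ := by
      ext z
      constructor
      · intro hz hz2
        exact hdisj z hz2 hz
      · intro hz
        rcases hcover z with h | h
        · exact h
        · exact absurd h hz
    rw [this]
    exact Metric.isClosed_closedBall.isOpen_compl
  have hclopen : IsClopen C1 := ⟨Metric.isClosed_closedBall, hC1open⟩
  rcases isClopen_iff.mp hclopen with h | h
  · have : x ∈ C1 := Metric.mem_closedBall_self (by nlinarith [hσpos x])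
    rw [h] at this
    exact this
  · have : y ∈ C1 := h ▸ Set.mem_univ y
    rw [hC1, Metric.mem_closedBall] at this
    rw [dist_comm] at this
    nlinarith [hσpos y]

theorem concentration_scale_distance {X : Type*} [MetricSpace X]
    [MeasurableSpace X] [BorelSpace X] [ConnectedSpace X]
    (μ : Measure X) [IsFiniteMeasure μ]
    (hpos : ∀ U : Set X, IsOpen U → U.Nonempty → 0 < μ U)
    (R0 : ℝ) (hR0 : 1 < R0) (σ : X → ℝ) (hσpos : ∀ x, 0 < σ x)
    (hσ : ∀ x, μ (Metric.ball x (σ x)) = μ {y : X | R0 * σ x ≤ dist x y}) :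
    ∀ x y : X, dist x y ≤ R0 * max (σ x) (σ y) + min (σ x) (σ y) := by
  intro x y
  rcases le_total (σ y) (σ x) with h | h
  · rw [max_eq_left h, min_eq_right h]
    exact concentration_aux μ hpos R0 hR0 σ hσpos hσ x y h
  · rw [max_eq_right h, min_eq_left h, dist_comm]
    exact concentration_aux μ hpos R0 hR0 σ hσpos hσ y x h
end

section
/- Let (X, d) be a compact metric space and let δ0 > 0, γ0 > 0. Then there exist constants δ̃0 > 0 and γ̃0 > 0, depending only on X, δ0 and γ0, with the following property: for all finite Borel measures μ1, μ2 on X and all Borel sets Ω_{1,1}, Ω_{1,2}, Ω_{2,1}, Ω_{2,2} ⊆ X such that d(Ω_{i,1}, Ω_{i,2}) ≥ δ0 for i = 1, 2 and μ_i(Ω_{i,j}) ≥ γ0·μ_i(X) for all i, j ∈ {1, 2}, there exist Borel sets Ω̃1, Ω̃2 ⊆ X with d(Ω̃1, Ω̃2) ≥ δ̃0 and μ_i(Ω̃_k) ≥ γ̃0·μ_i(X) for all i, k ∈ {1, 2}. -/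
open MeasureTheory Metric ENNReal

lemma pigeon_ball {X : Type*} [MetricSpace X] [MeasurableSpace X]
    (μ : Measure X) (s : Finset X) (r : ℝ)
    (hcov : (Set.univ : Set X) ⊆ ⋃ x ∈ s, ball x r)
    (hsne : s.Nonempty) (Ω : Set X) (c : ℝ≥0∞)
    (hc : (s.card : ℝ≥0∞) * c ≤ μ Ω) :
    ∃ x ∈ s, c ≤ μ (Ω ∩ ball x r) := by
  obtain ⟨x, hxs, hmax⟩ := s.exists_max_image (fun x => μ (Ω ∩ ball x r)) hsne
  refine ⟨x, hxs, ?_⟩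
  have hsub : Ω ⊆ ⋃ y ∈ s, Ω ∩ ball y r := by
    intro a ha
    have h := hcov (Set.mem_univ a)
    simp only [Set.mem_iUnion] at h ⊢
    obtain ⟨y, hy, hb⟩ := h
    exact ⟨y, hy, ha, hb⟩
  have h1 : μ Ω ≤ ∑ y ∈ s, μ (Ω ∩ ball y r) :=
    (measure_mono hsub).trans (measure_biUnion_finset_le s _)
  have h2 : ∑ y ∈ s, μ (Ω ∩ ball y r) ≤ s.card • μ (Ω ∩ ball x r) :=
    Finset.sum_le_card_nsmul s _ _ (fun y hy => hmax y hy)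
  rw [nsmul_eq_mul] at h2
  have hN0 : (s.card : ℝ≥0∞) ≠ 0 := by
    simpa using hsne.card_pos.ne'
  exact (ENNReal.mul_le_mul_iff_right hN0 (ENNReal.natCast_ne_top _)).mp
    (hc.trans (h1.trans h2))

theorem covering_argument {X : Type*} [MetricSpace X] [CompactSpace X]
    [MeasurableSpace X] [BorelSpace X]
    (δ0 γ0 : ℝ) (hδ0 : 0 < δ0) (hγ0 : 0 < γ0) :
    ∃ δt γt : ℝ, 0 < δt ∧ 0 < γt ∧
      ∀ (μ1 μ2 : Measure X), IsFiniteMeasure μ1 → IsFiniteMeasure μ2 →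
      ∀ Ω11 Ω12 Ω21 Ω22 : Set X,
        MeasurableSet Ω11 → MeasurableSet Ω12 →
        MeasurableSet Ω21 → MeasurableSet Ω22 →
        (∀ x ∈ Ω11, ∀ y ∈ Ω12, δ0 ≤ dist x y) →
        (∀ x ∈ Ω21, ∀ y ∈ Ω22, δ0 ≤ dist x y) →
        ENNReal.ofReal γ0 * μ1 Set.univ ≤ μ1 Ω11 →
        ENNReal.ofReal γ0 * μ1 Set.univ ≤ μ1 Ω12 →
        ENNReal.ofReal γ0 * μ2 Set.univ ≤ μ2 Ω21 →
        ENNReal.ofReal γ0 * μ2 Set.univ ≤ μ2 Ω22 →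
        ∃ Ωt1 Ωt2 : Set X, MeasurableSet Ωt1 ∧ MeasurableSet Ωt2 ∧
          (∀ x ∈ Ωt1, ∀ y ∈ Ωt2, δt ≤ dist x y) ∧
          ENNReal.ofReal γt * μ1 Set.univ ≤ μ1 Ωt1 ∧
          ENNReal.ofReal γt * μ1 Set.univ ≤ μ1 Ωt2 ∧
          ENNReal.ofReal γt * μ2 Set.univ ≤ μ2 Ωt1 ∧
          ENNReal.ofReal γt * μ2 Set.univ ≤ μ2 Ωt2 := by
  set r : ℝ := δ0 / 16 with hr
  have hrpos : 0 < r := by positivity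
  obtain ⟨s, hs⟩ := isCompact_univ.elim_finite_subcover (fun x : X => ball x r)
    (fun x => isOpen_ball) (fun x _ => Set.mem_iUnion.2 ⟨x, mem_ball_self hrpos⟩)
  refine ⟨δ0 / 8, γ0 / (s.card + 1), by positivity, by positivity, ?_⟩
  intro μ1 μ2 hf1 hf2 Ω11 Ω12 Ω21 Ω22 m11 m12 m21 m22 hsep1 hsep2 hm11 hm12 hm21 hm22
  have hcard0 : (0:ℝ) ≤ (s.card : ℝ) := Nat.cast_nonneg _
  have hγle : γ0 / (s.card + 1) ≤ γ0 := by
    apply div_le_self hγ0.le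
    linarith
  by_cases h1 : μ1 Set.univ = 0
  · refine ⟨Ω21, Ω22, m21, m22,
      fun x hx y hy => le_trans (by linarith) (hsep2 x hx y hy), ?_, ?_, ?_, ?_⟩
    · simp [h1]
    · simp [h1]
    · exact le_trans (mul_le_mul_left (ENNReal.ofReal_le_ofReal hγle) _) hm21
    · exact le_trans (mul_le_mul_left (ENNReal.ofReal_le_ofReal hγle) _) hm22
  by_cases h2 : μ2 Set.univ = 0
  · refine ⟨Ω11, Ω12, m11, m12,
      fun x hx y hy => le_trans (by linarith) (hsep1 x hx y hy), ?_, ?_, ?_, ?_⟩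
    · exact le_trans (mul_le_mul_left (ENNReal.ofReal_le_ofReal hγle) _) hm11
    · exact le_trans (mul_le_mul_left (ENNReal.ofReal_le_ofReal hγle) _) hm12
    · simp [h2]
    · simp [h2]
  -- X is nonempty, hence the cover is nonempty
  have hXne : Nonempty X := by
    by_contra h
    rw [not_nonempty_iff] at h
    exact h1 (by rw [Set.univ_eq_empty_iff.mpr h]; simp)
  obtain ⟨x0⟩ := hXne
  have hmem := hs (Set.mem_univ x0)
  simp only [Set.mem_iUnion] at hmem
  obtain ⟨y0, hy0, -⟩ := hmem
  have hsne : s.Nonempty := ⟨y0, hy0⟩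
  -- coefficient arithmetic
  have hkey : ∀ (μ : Measure X) (Ω : Set X),
      ENNReal.ofReal γ0 * μ Set.univ ≤ μ Ω →
      (s.card : ℝ≥0∞) * (ENNReal.ofReal (γ0 / (s.card + 1)) * μ Set.univ) ≤ μ Ω := by
    intro μ Ω h
    refine le_trans ?_ h
    rw [← mul_assoc]
    refine mul_le_mul_left ?_ _
    rw [← ENNReal.ofReal_natCast s.card, ← ENNReal.ofReal_mul (Nat.cast_nonneg _)]
    apply ENNReal.ofReal_le_ofReal
    rw [← mul_div_assoc, div_le_iff₀ (by positivity : (0:ℝ) < (s.card:ℝ) + 1)]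
    nlinarith
  obtain ⟨x1, hx1s, hA1⟩ := pigeon_ball μ1 s r hs hsne Ω11 _ (hkey μ1 Ω11 hm11)
  obtain ⟨x2, hx2s, hA2⟩ := pigeon_ball μ1 s r hs hsne Ω12 _ (hkey μ1 Ω12 hm12)
  obtain ⟨y1, hy1s, hC1⟩ := pigeon_ball μ2 s r hs hsne Ω21 _ (hkey μ2 Ω21 hm21)
  obtain ⟨y2, hy2s, hC2⟩ := pigeon_ball μ2 s r hs hsne Ω22 _ (hkey μ2 Ω22 hm22)
  -- two points in one small ball are at distance < δ0/8
  have hdiam : ∀ (z a b : X), a ∈ ball z r → b ∈ ball z r → dist a b < δ0 / 8 := by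
    intro z a b ha hb
    rw [mem_ball] at ha hb
    have ht := dist_triangle a z b
    rw [dist_comm z b] at ht
    linarith
  by_cases h12 : ∀ a ∈ Ω11 ∩ ball x1 r, ∀ c ∈ Ω22 ∩ ball y2 r, δ0 / 8 ≤ dist a c
  · by_cases h21 : ∀ a ∈ Ω12 ∩ ball x2 r, ∀ c ∈ Ω21 ∩ ball y1 r, δ0 / 8 ≤ dist a c
    · -- pair (A1 ∪ C1, A2 ∪ C2)
      refine ⟨(Ω11 ∩ ball x1 r) ∪ (Ω21 ∩ ball y1 r),
        (Ω12 ∩ ball x2 r) ∪ (Ω22 ∩ ball y2 r),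
        (m11.inter measurableSet_ball).union (m21.inter measurableSet_ball),
        (m12.inter measurableSet_ball).union (m22.inter measurableSet_ball),
        ?_, ?_, ?_, ?_, ?_⟩
      · rintro x (hx | hx) y (hy | hy)
        · exact le_trans (by linarith) (hsep1 x hx.1 y hy.1)
        · exact h12 x hx y hy
        · rw [dist_comm]; exact h21 y hy x hx
        · exact le_trans (by linarith) (hsep2 x hx.1 y hy.1)
      · exact le_trans hA1 (measure_mono Set.subset_union_left)
      · exact le_trans hA2 (measure_mono Set.subset_union_left)
      · exact le_trans hC1 (measure_mono Set.subset_union_right)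
      · exact le_trans hC2 (measure_mono Set.subset_union_right)
    · push_neg at h21
      obtain ⟨a0, ha0, c0, hc0, hlt⟩ := h21
      have claim1 : ∀ x ∈ Ω11 ∩ ball x1 r, ∀ y ∈ Ω21 ∩ ball y1 r, δ0 / 8 ≤ dist x y := by
        intro x hx y hy
        have hxa : δ0 ≤ dist x a0 := hsep1 x hx.1 a0 ha0.1
        have hyc : dist y c0 < δ0 / 8 := hdiam y1 y c0 hy.2 hc0.2
        have ht := dist_triangle4 x y c0 a0
        rw [dist_comm c0 a0] at ht
        linarith
      have claim2 : ∀ x ∈ Ω12 ∩ ball x2 r, ∀ y ∈ Ω22 ∩ ball y2 r, δ0 / 8 ≤ dist x y := by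
        intro x hx y hy
        have hcy : δ0 ≤ dist c0 y := hsep2 c0 hc0.1 y hy.1
        have hxa : dist x a0 < δ0 / 8 := hdiam x2 x a0 hx.2 ha0.2
        have ht := dist_triangle4 c0 a0 x y
        rw [dist_comm a0 x, dist_comm c0 a0] at ht
        linarith
      refine ⟨(Ω11 ∩ ball x1 r) ∪ (Ω22 ∩ ball y2 r),
        (Ω12 ∩ ball x2 r) ∪ (Ω21 ∩ ball y1 r),
        (m11.inter measurableSet_ball).union (m22.inter measurableSet_ball),
        (m12.inter measurableSet_ball).union (m21.inter measurableSet_ball),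
        ?_, ?_, ?_, ?_, ?_⟩
      · rintro x (hx | hx) y (hy | hy)
        · exact le_trans (by linarith) (hsep1 x hx.1 y hy.1)
        · exact claim1 x hx y hy
        · rw [dist_comm]; exact claim2 y hy x hx
        · rw [dist_comm]; exact le_trans (by linarith) (hsep2 y hy.1 x hx.1)
      · exact le_trans hA1 (measure_mono Set.subset_union_left)
      · exact le_trans hA2 (measure_mono Set.subset_union_left)
      · exact le_trans hC2 (measure_mono Set.subset_union_right)
      · exact le_trans hC1 (measure_mono Set.subset_union_right)
  · push_neg at h12
    obtain ⟨a0, ha0, c0, hc0, hlt⟩ := h12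
    have claim1 : ∀ x ∈ Ω11 ∩ ball x1 r, ∀ y ∈ Ω21 ∩ ball y1 r, δ0 / 8 ≤ dist x y := by
      intro x hx y hy
      have hyc : δ0 ≤ dist y c0 := hsep2 y hy.1 c0 hc0.1
      have hxa : dist x a0 < δ0 / 8 := hdiam x1 x a0 hx.2 ha0.2
      have ht := dist_triangle4 y x a0 c0
      rw [dist_comm y x] at ht
      linarith
    have claim2 : ∀ x ∈ Ω12 ∩ ball x2 r, ∀ y ∈ Ω22 ∩ ball y2 r, δ0 / 8 ≤ dist x y := by
      intro x hx y hy
      have hax : δ0 ≤ dist a0 x := hsep1 a0 ha0.1 x hx.1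
      have hcy : dist c0 y < δ0 / 8 := hdiam y2 c0 y hc0.2 hy.2
      have ht := dist_triangle4 a0 c0 y x
      rw [dist_comm y x] at ht
      linarith
    refine ⟨(Ω11 ∩ ball x1 r) ∪ (Ω22 ∩ ball y2 r),
      (Ω12 ∩ ball x2 r) ∪ (Ω21 ∩ ball y1 r),
      (m11.inter measurableSet_ball).union (m22.inter measurableSet_ball),
      (m12.inter measurableSet_ball).union (m21.inter measurableSet_ball),
      ?_, ?_, ?_, ?_, ?_⟩
    · rintro x (hx | hx) y (hy | hy)
      · exact le_trans (by linarith) (hsep1 x hx.1 y hy.1)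
      · exact claim1 x hx y hy
      · rw [dist_comm]; exact claim2 y hy x hx
      · rw [dist_comm]; exact le_trans (by linarith) (hsep2 y hy.1 x hx.1)
    · exact le_trans hA1 (measure_mono Set.subset_union_left)
    · exact le_trans hA2 (measure_mono Set.subset_union_left)
    · exact le_trans hC2 (measure_mono Set.subset_union_right)
    · exact le_trans hC1 (measure_mono Set.subset_union_right)
end

section
/- For all real numbers λ > 0 and R > 0, the function φ : ℝ² → ℝ defined by φ(y) = 2·log(1 + λ²‖y‖²) is differentiable and satisfies ∫_{B(0,R)} ‖Dφ(y)‖² dy = 16π·( log(1 + λ²R²) + (1 + λ²R²)^{−1} − 1 ). -/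
open MeasureTheory

lemma bubble_hfd (lam : ℝ) (hlam : 0 < lam) (y : EuclideanSpace ℝ (Fin 2)) :
    HasFDerivAt (fun y : EuclideanSpace ℝ (Fin 2) => 2 * Real.log (1 + lam ^ 2 * ‖y‖ ^ 2))
      ((4 * lam ^ 2 / (1 + lam ^ 2 * ‖y‖ ^ 2)) • (innerSL ℝ y)) y := by
  have hu : (0:ℝ) < 1 + lam ^ 2 * ‖y‖ ^ 2 := by positivity
  have h1 : HasFDerivAt (fun y : EuclideanSpace ℝ (Fin 2) => ‖y‖ ^ 2)
      (2 • (innerSL ℝ y)) y := by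
    simpa using (hasFDerivAt_id y).norm_sq
  have h2 : HasFDerivAt (fun y : EuclideanSpace ℝ (Fin 2) => 1 + lam ^ 2 * ‖y‖ ^ 2)
      (lam ^ 2 • (2 • (innerSL ℝ y))) y := (h1.const_mul (lam ^ 2)).const_add 1
  have h3 := (h2.log hu.ne').const_mul (2:ℝ)
  refine h3.congr_fderiv ?_
  ext v
  simp [smul_smul, div_eq_mul_inv]
  ring

lemma bubble_hnorm (lam : ℝ) (hlam : 0 < lam) (y : EuclideanSpace ℝ (Fin 2)) :
    ‖fderiv ℝ (fun y : EuclideanSpace ℝ (Fin 2) => 2 * Real.log (1 + lam ^ 2 * ‖y‖ ^ 2)) y‖ ^ 2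
      = 16 * lam ^ 4 * ‖y‖ ^ 2 / (1 + lam ^ 2 * ‖y‖ ^ 2) ^ 2 := by
  have hu : (0:ℝ) < 1 + lam ^ 2 * ‖y‖ ^ 2 := by positivity
  rw [(bubble_hfd lam hlam y).fderiv, norm_smul, innerSL_apply_norm, Real.norm_eq_abs,
    abs_of_nonneg (by positivity)]
  field_simp
  ring

lemma bubble_gcont (lam : ℝ) (hlam : 0 < lam) :
    Continuous (fun r : ℝ => r * (16 * lam ^ 4 * r ^ 2 / (1 + lam ^ 2 * r ^ 2) ^ 2)) := by
  apply continuous_id.mul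
  apply Continuous.div (by continuity) (by continuity)
  intro r
  have : (0:ℝ) < 1 + lam ^ 2 * r ^ 2 := by positivity
  positivity

lemma bubble_ftc (lam R : ℝ) (hlam : 0 < lam) (hR : 0 < R) :
    ∫ r in (0:ℝ)..R, r * (16 * lam ^ 4 * r ^ 2 / (1 + lam ^ 2 * r ^ 2) ^ 2)
      = 8 * (Real.log (1 + lam ^ 2 * R ^ 2) + (1 + lam ^ 2 * R ^ 2)⁻¹ - 1) := by
  have key : ∀ r : ℝ, HasDerivAt
      (fun r : ℝ => 8 * (Real.log (1 + lam ^ 2 * r ^ 2) + (1 + lam ^ 2 * r ^ 2)⁻¹))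
      (r * (16 * lam ^ 4 * r ^ 2 / (1 + lam ^ 2 * r ^ 2) ^ 2)) r := by
    intro r
    have hu : (0:ℝ) < 1 + lam ^ 2 * r ^ 2 := by positivity
    have h1 : HasDerivAt (fun r : ℝ => 1 + lam ^ 2 * r ^ 2) (lam ^ 2 * (2 * r)) r := by
      simpa using ((hasDerivAt_pow 2 r).const_mul (lam ^ 2)).const_add 1
    have h2 := ((h1.log hu.ne').add (h1.inv hu.ne')).const_mul (8:ℝ)
    refine h2.congr_deriv ?_
    field_simp
    ring
  rw [intervalIntegral.integral_eq_sub_of_hasDerivAt (fun r _ => key r)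
    ((bubble_gcont lam hlam).intervalIntegrable _ _)]
  simp
  ring

lemma bubble_radial (lam R : ℝ) (hlam : 0 < lam) (hR : 0 < R) :
    ∫ y in Metric.ball (0 : EuclideanSpace ℝ (Fin 2)) R,
        ‖fderiv ℝ (fun y : EuclideanSpace ℝ (Fin 2) =>
            2 * Real.log (1 + lam ^ 2 * ‖y‖ ^ 2)) y‖ ^ 2 =
      2 * Real.pi *
        ∫ r in Set.Ioo (0:ℝ) R, r * (16 * lam ^ 4 * r ^ 2 / (1 + lam ^ 2 * r ^ 2) ^ 2) := by
  set g : ℝ → ℝ := fun r => 16 * lam ^ 4 * r ^ 2 / (1 + lam ^ 2 * r ^ 2) ^ 2 with hg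
  set f : ℝ → ℝ := Set.indicator (Set.Iio R) g with hf
  have step1 : ∫ y in Metric.ball (0 : EuclideanSpace ℝ (Fin 2)) R,
      ‖fderiv ℝ (fun y : EuclideanSpace ℝ (Fin 2) =>
          2 * Real.log (1 + lam ^ 2 * ‖y‖ ^ 2)) y‖ ^ 2
      = ∫ y : EuclideanSpace ℝ (Fin 2), f ‖y‖ := by
    rw [← integral_indicator measurableSet_ball]
    congr 1
    funext y
    rw [hf]
    by_cases h : y ∈ Metric.ball (0 : EuclideanSpace ℝ (Fin 2)) R
    · rw [Set.indicator_of_mem h,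
        Set.indicator_of_mem (Set.mem_Iio.mpr (mem_ball_zero_iff.mp h)), bubble_hnorm lam hlam]
    · rw [Set.indicator_of_notMem h, Set.indicator_of_notMem
        (fun hm => h (mem_ball_zero_iff.mpr (Set.mem_Iio.mp hm)))]
  rw [step1, integral_fun_norm_addHaar volume f]
  have hdim : Module.finrank ℝ (EuclideanSpace ℝ (Fin 2)) = 2 := by
    simp [finrank_euclideanSpace]
  rw [hdim]
  have hvol : (volume (Metric.ball (0 : EuclideanSpace ℝ (Fin 2)) 1)).toReal = Real.pi := by
    rw [EuclideanSpace.volume_ball]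
    have h2 : Real.Gamma ((1:ℝ) + 1) = 1 := by
      rw [show (1:ℝ)+1 = 2 by norm_num, Real.Gamma_two]
    simp [h2, Real.sq_sqrt Real.pi_pos.le, ENNReal.toReal_ofReal Real.pi_pos.le]
  rw [measureReal_def, hvol]
  have step2 : ∫ r in Set.Ioi (0:ℝ), r ^ (2-1) • f r
      = ∫ r in Set.Ioo (0:ℝ) R, r * g r := by
    have key : ∀ r : ℝ, r ^ (2-1) • f r = Set.indicator (Set.Iio R) (fun r => r * g r) r := by
      intro r
      by_cases h : r ∈ Set.Iio R
      · simp [hf, Set.indicator_of_mem h]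
      · simp [hf, Set.indicator_of_notMem h]
    simp_rw [key]
    rw [setIntegral_indicator measurableSet_Iio, Set.Ioi_inter_Iio]
  rw [step2, nsmul_eq_mul, smul_eq_mul]
  push_cast
  ring

theorem bubble_dirichlet_energy (lam R : ℝ) (hlam : 0 < lam) (hR : 0 < R) :
    Differentiable ℝ
      (fun y : EuclideanSpace ℝ (Fin 2) => 2 * Real.log (1 + lam ^ 2 * ‖y‖ ^ 2)) ∧
    ∫ y in Metric.ball (0 : EuclideanSpace ℝ (Fin 2)) R,
        ‖fderiv ℝ (fun y : EuclideanSpace ℝ (Fin 2) =>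
            2 * Real.log (1 + lam ^ 2 * ‖y‖ ^ 2)) y‖ ^ 2 =
      16 * Real.pi *
        (Real.log (1 + lam ^ 2 * R ^ 2) + (1 + lam ^ 2 * R ^ 2)⁻¹ - 1) := by
  refine ⟨fun y => (bubble_hfd lam hlam y).differentiableAt, ?_⟩
  rw [bubble_radial lam R hlam hR]
  have hIoo : ∫ r in Set.Ioo (0:ℝ) R, r * (16 * lam ^ 4 * r ^ 2 / (1 + lam ^ 2 * r ^ 2) ^ 2)
      = 8 * (Real.log (1 + lam ^ 2 * R ^ 2) + (1 + lam ^ 2 * R ^ 2)⁻¹ - 1) := by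
    rw [← MeasureTheory.integral_Ioc_eq_integral_Ioo,
      ← intervalIntegral.integral_of_le hR.le, bubble_ftc lam R hlam hR]
  rw [hIoo]
  ring
end
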